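/- Let X be a real Banach space. If X satisfies condition (I), then every closed linear subspace of X and every quotient of X by a closed linear subspace satisfies condition (B). If X satisfies condition (II), then every closed linear subspace of X and every quotient of X by a closed linear subspace satisfies condition (1-B). -/

import Mathlib

open Cardinal Ordinal Set Pointwise

universe u

/-- condition (I) -/
def CondI (X : Type u) [SeminormedAddCommGroup X] [NormedSpace ℝ X] : Prop :=
  ∀ κ : Cardinal.{u}, κ.IsRegular → ℵ₀ < κ →
    ∀ A : Ordinal.{u} → Set X,
      (∀ α < κ.ord, ∃ (v : X) (Z : Submodule ℝ X), IsClosed (Z : Set X) ∧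
          A α = (fun z => v + z) '' (Z : Set X)) →
      (∀ α β, α ≤ β → β < κ.ord → A β ⊆ A α) →
      (∀ α < κ.ord, (A α).Nonempty) →
      (⋂ α ∈ Set.Iio κ.ord, A α).Nonempty

/-- condition (II) -/
def CondII (X : Type u) [SeminormedAddCommGroup X] [NormedSpace ℝ X] : Prop :=
  ∀ κ : Cardinal.{u}, κ.IsRegular → ℵ₀ < κ →
    ∀ Z : Ordinal.{u} → Submodule ℝ X,
      (∀ α < κ.ord, IsClosed ((Z α : Set X))) →
      (∀ α β, α ≤ β → β < κ.ord → Z β ≤ Z α) →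
      ∀ f : X →L[ℝ] ℝ, (∀ v ∈ ⋂ α ∈ Set.Iio κ.ord, (Z α : Set X), f v = 0) →
        ∃ α < κ.ord, ∀ v ∈ Z α, f v = 0

/-- condition (B) -/
def CondB (X : Type u) [SeminormedAddCommGroup X] [NormedSpace ℝ X] : Prop :=
  ∀ κ : Cardinal.{u}, κ.IsRegular → ℵ₀ < κ →
    ∀ Z : Ordinal.{u} → Submodule ℝ X,
      (∀ α < κ.ord, IsClosed ((Z α : Set X))) →
      (∀ α β, α ≤ β → β < κ.ord → Z β ≤ Z α) →
      (⋂ α ∈ Set.Iio κ.ord, (Z α : Set X)) = {0} →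
      Bornology.IsBounded
        (⋂ α ∈ Set.Iio κ.ord, closure (Metric.closedBall (0:X) 1 + (Z α : Set X)))

/-- condition (r-B) -/
def CondrB (X : Type u) [SeminormedAddCommGroup X] [NormedSpace ℝ X] (r : ℝ) : Prop :=
  ∀ κ : Cardinal.{u}, κ.IsRegular → ℵ₀ < κ →
    ∀ Z : Ordinal.{u} → Submodule ℝ X,
      (∀ α < κ.ord, IsClosed ((Z α : Set X))) →
      (∀ α β, α ≤ β → β < κ.ord → Z β ≤ Z α) →
      (⋂ α ∈ Set.Iio κ.ord, (Z α : Set X)) = {0} →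
      (⋂ α ∈ Set.Iio κ.ord, closure (Metric.closedBall (0:X) 1 + (Z α : Set X))) ⊆
        Metric.closedBall (0:X) r

lemma ord_pos_aux {κ : Cardinal.{u}} (hreg : κ.IsRegular) : (0 : Ordinal.{u}) < κ.ord :=
  Cardinal.lt_ord.2 (by simpa using hreg.pos)

/-- (II) implies (1-B). -/
lemma condII_to_condrB {W : Type u} [NormedAddCommGroup W] [NormedSpace ℝ W] :
    CondII W → CondrB W 1 := by
  intro h κ hreg hκ Z hcl hmono hint x hx
  rw [Metric.mem_closedBall, dist_zero_right]
  refine NormedSpace.norm_le_dual_bound ℝ x zero_le_one fun f => ?_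
  obtain ⟨α, hα, hfZ⟩ := h κ hreg hκ Z hcl hmono f (by
    intro v hv
    rw [hint] at hv
    simp only [Set.mem_singleton_iff] at hv
    simp [hv])
  rw [one_mul]
  have hxα : x ∈ closure (Metric.closedBall (0:W) 1 + (Z α : Set W)) :=
    Set.mem_iInter₂.1 hx α hα
  have hsub : Metric.closedBall (0:W) 1 + (Z α : Set W) ⊆ {y | ‖f y‖ ≤ ‖f‖} := by
    rintro y ⟨b, hb, z, hz, rfl⟩
    simp only [Set.mem_setOf_eq, map_add, hfZ z hz, add_zero]
    calc ‖f b‖ ≤ ‖f‖ * ‖b‖ := f.le_opNorm b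
    _ ≤ ‖f‖ * 1 := by
        have : ‖b‖ ≤ 1 := mem_closedBall_zero_iff.1 hb
        exact mul_le_mul_of_nonneg_left this (norm_nonneg f)
    _ = ‖f‖ := mul_one _
  have hcl' : IsClosed {y : W | ‖f y‖ ≤ ‖f‖} :=
    isClosed_le (f.continuous.norm) continuous_const
  exact (closure_minimal hsub hcl') hxα

/-- (1-B) implies (B). -/
lemma condrB_to_condB {W : Type u} [SeminormedAddCommGroup W] [NormedSpace ℝ W]
    (h : CondrB W 1) : CondB W := by
  intro κ hreg hκ Z hcl hmono hint
  exact Metric.isBounded_closedBall.subset (h κ hreg hκ Z hcl hmono hint)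

/-- (I) implies (II). -/
lemma condI_to_condII {W : Type u} [SeminormedAddCommGroup W] [NormedSpace ℝ W] :
    CondI W → CondII W := by
  intro h κ hreg hκ Z hcl hmono f hf
  by_contra hc
  push_neg at hc
  have key : ∀ α < κ.ord, ∃ w, w ∈ Z α ∧ f w = 1 := by
    intro α hα
    obtain ⟨v, hv, hfv⟩ := hc α hα
    exact ⟨(f v)⁻¹ • v, (Z α).smul_mem _ hv, by
      simp [inv_mul_cancel₀ hfv]⟩
  set A : Ordinal.{u} → Set W := fun α => {x | x ∈ Z α ∧ f x = 1} with hA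
  have h1 : ∀ α < κ.ord, ∃ (v : W) (Z' : Submodule ℝ W), IsClosed (Z' : Set W) ∧
      A α = (fun z => v + z) '' (Z' : Set W) := by
    intro α hα
    obtain ⟨w, hw, hfw⟩ := key α hα
    refine ⟨w, Z α ⊓ LinearMap.ker (f : W →ₗ[ℝ] ℝ), ?_, ?_⟩
    · have hset : ((Z α ⊓ LinearMap.ker (f : W →ₗ[ℝ] ℝ) : Submodule ℝ W) : Set W)
          = (Z α : Set W) ∩ (f ⁻¹' {0}) := by
        ext y
        simp [LinearMap.mem_ker]
      rw [hset]
      exact (hcl α hα).inter (isClosed_singleton.preimage f.continuous)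
    · ext x
      simp only [hA, Set.mem_setOf_eq, Set.mem_image, SetLike.mem_coe, Submodule.mem_inf,
        LinearMap.mem_ker]
      constructor
      · rintro ⟨hx, hfx⟩
        exact ⟨x - w, ⟨(Z α).sub_mem hx hw, by simp [map_sub, hfx, hfw]⟩, by abel⟩
      · rintro ⟨z, ⟨hz, hfz⟩, rfl⟩
        exact ⟨(Z α).add_mem hw hz, by simp [map_add, hfw, ContinuousLinearMap.coe_coe] at hfz ⊢; exact hfz⟩
  have h2 : ∀ α β, α ≤ β → β < κ.ord → A β ⊆ A α := fun α β hab hb x hx =>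
    ⟨hmono α β hab hb hx.1, hx.2⟩
  have h3 : ∀ α < κ.ord, (A α).Nonempty := fun α hα =>
    (key α hα).imp fun w hw => ⟨hw.1, hw.2⟩
  obtain ⟨x, hx⟩ := h κ hreg hκ A h1 h2 h3
  have hx0 := Set.mem_iInter₂.1 hx 0 (ord_pos_aux hreg)
  have hx0' : f x = 0 := hf x (Set.mem_iInter₂.2 fun α hα => (Set.mem_iInter₂.1 hx α hα).1)
  rw [hx0.2] at hx0'
  norm_num at hx0'

/-- (II) passes to closed subspaces. -/
lemma condII_subspace {X : Type u} [NormedAddCommGroup X] [NormedSpace ℝ X]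
    (h : CondII X) (Y : Submodule ℝ X) (hY : IsClosed (Y : Set X)) : CondII ↥Y := by
  intro κ hreg hκ Z hcl hmono f hf
  obtain ⟨g, hg, -⟩ := exists_extension_norm_eq Y f
  have hvanish : ∀ v ∈ ⋂ α ∈ Set.Iio κ.ord, (((Z α).map Y.subtype : Submodule ℝ X) : Set X),
      g v = 0 := by
    intro v hv
    obtain ⟨y, hy0, rfl⟩ := Set.mem_iInter₂.1 hv 0 (ord_pos_aux hreg)
    have hyall : ∀ α < κ.ord, y ∈ Z α := by
      intro α hα
      obtain ⟨y', hy', hval⟩ := Set.mem_iInter₂.1 hv α hα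
      have : y' = y := Subtype.coe_injective hval
      rwa [this] at hy'
    have hfy : f y = 0 := hf y (Set.mem_iInter₂.2 fun α hα => hyall α hα)
    exact (hg y).trans hfy
  obtain ⟨α, hα, hgZ⟩ := h κ hreg hκ (fun α => (Z α).map Y.subtype)
    (fun α hα => by
      have : (((Z α).map Y.subtype : Submodule ℝ X) : Set X)
          = Subtype.val '' ((Z α : Set ↥Y)) := by
        ext y
        simp [Submodule.mem_map]
      rw [this]
      exact hY.isClosedEmbedding_subtypeVal.isClosedMap _ (hcl α hα))
    (fun α β hab hb => Submodule.map_mono (hmono α β hab hb))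
    g hvanish
  refine ⟨α, hα, fun v hv => ?_⟩
  have := hgZ (↑v) (Submodule.mem_map.2 ⟨v, hv, rfl⟩)
  rwa [hg v] at this

/-- (II) passes to quotients. -/
lemma condII_quotient {X : Type u} [NormedAddCommGroup X] [NormedSpace ℝ X]
    (h : CondII X) (Y : Submodule ℝ X) : CondII (X ⧸ Y) := by
  intro κ hreg hκ Z hcl hmono f hf
  let π : X →L[ℝ] (X ⧸ Y) := LinearMap.mkContinuous Y.mkQ 1
    (fun x => by rw [one_mul]; exact Submodule.Quotient.norm_mk_le Y x)
  have hvanish : ∀ v ∈ ⋂ α ∈ Set.Iio κ.ord, (((Z α).comap Y.mkQ : Submodule ℝ X) : Set X),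
      (f.comp π) v = 0 := by
    intro v hv
    exact hf (π v) (Set.mem_iInter₂.2 fun α hα => Set.mem_iInter₂.1 hv α hα)
  obtain ⟨α, hα, hgZ⟩ := h κ hreg hκ (fun α => (Z α).comap Y.mkQ)
    (fun α hα => by
      have : (((Z α).comap Y.mkQ : Submodule ℝ X) : Set X) = π ⁻¹' ((Z α : Set (X ⧸ Y))) := rfl
      rw [this]
      exact (hcl α hα).preimage π.continuous)
    (fun α β hab hb => Submodule.comap_mono (hmono α β hab hb))
    (f.comp π) hvanish
  refine ⟨α, hα, fun w hw => ?_⟩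
  obtain ⟨v, rfl⟩ := Submodule.mkQ_surjective Y w
  exact hgZ v hw

theorem stmt4 {X : Type u} [NormedAddCommGroup X] [NormedSpace ℝ X] [CompleteSpace X] :
    (CondI X → ∀ Y : Submodule ℝ X, IsClosed (Y : Set X) →
      CondB ↥Y ∧ CondB (X ⧸ Y)) ∧
    (CondII X → ∀ Y : Submodule ℝ X, IsClosed (Y : Set X) →
      CondrB ↥Y 1 ∧ CondrB (X ⧸ Y) 1) := by
  have main : CondII X → ∀ Y : Submodule ℝ X, IsClosed (Y : Set X) →
      CondrB ↥Y 1 ∧ CondrB (X ⧸ Y) 1 := by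
    intro hII Y hY
    haveI : IsClosed (Y : Set X) := hY
    exact ⟨condII_to_condrB (condII_subspace hII Y hY),
      condII_to_condrB (condII_quotient hII Y)⟩
  refine ⟨?_, main⟩
  intro hI Y hY
  obtain ⟨h1, h2⟩ := main (condI_to_condII hI) Y hY
  exact ⟨condrB_to_condB h1, condrB_to_condB h2⟩
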